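/- Let p > 3 be prime with p ≡ 2 (mod 3) and c ∈ F_p nonzero. For S_λ = Σ_{x ∈ F_p} σ(x³ + λ x + c), the variance of (S_λ)_{λ∈F_p} equals p − 2 − σ(−1). -/

import Mathlib

open Finset

private lemma rc_ne_two {p : ℕ} [Fact p.Prime] (hp : 3 < p) : ringChar (ZMod p) ≠ 2 := by
  rw [ZMod.ringChar_zmod_n]; omega

private lemma sum_chi_zero {p : ℕ} [Fact p.Prime] (hp : 3 < p) :
    ∑ t : ZMod p, quadraticChar (ZMod p) t = 0 :=
  quadraticChar_sum_zero (rc_ne_two hp)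

private lemma sum_affine {p : ℕ} [Fact p.Prime] (hp : 3 < p) {x : ZMod p} (hx : x ≠ 0)
    (c : ZMod p) : ∑ l : ZMod p, quadraticChar (ZMod p) (x ^ 3 + l * x + c) = 0 := by
  have hbij : Function.Bijective (fun l : ZMod p => x ^ 3 + l * x + c) := by
    apply Finite.injective_iff_bijective.mp
    intro a b hab
    simp only [add_left_inj, add_right_inj] at hab
    exact mul_right_cancel₀ hx hab
  rw [← sum_chi_zero hp]
  exact Fintype.sum_bijective _ hbij _ _ (fun l => rfl)

private lemma cube_bij {p : ℕ} [Fact p.Prime] (hp : 3 < p) (hp3 : p % 3 = 2) :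
    Function.Bijective (fun x : ZMod p => x ^ 3) := by
  have he : 3 * ((2 * p - 1) / 3) = 2 * (p - 1) + 1 := by omega
  apply Finite.injective_iff_bijective.mp
  intro a b hab
  simp only at hab
  have key : ∀ x : ZMod p, (x ^ 3) ^ ((2 * p - 1) / 3) = x := by
    intro x
    rw [← pow_mul, he, pow_succ, mul_comm 2 (p - 1), pow_mul]
    by_cases hx : x = 0
    · simp [hx]
    · rw [ZMod.pow_card_sub_one_eq_one hx, one_pow, one_mul]
  rw [← key a, ← key b, hab]

private lemma sum_sq_shift {p : ℕ} [Fact p.Prime] (hp : 3 < p) :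
    ∑ l : ZMod p, quadraticChar (ZMod p) (l * l) = (p : ℤ) - 1 := by
  have : ∀ l : ZMod p, quadraticChar (ZMod p) (l * l)
      = 1 - (if l = 0 then (1 : ℤ) else 0) := by
    intro l
    by_cases hl : l = 0
    · simp [hl]
    · rw [← pow_two, quadraticChar_sq_one' hl, if_neg hl, sub_zero]
  rw [Finset.sum_congr rfl fun l _ => this l, Finset.sum_sub_distrib,
    Finset.sum_const, Finset.sum_ite_eq' Finset.univ (0 : ZMod p) (fun _ => (1:ℤ))]
  simp [ZMod.card]

private lemma sum_mul_shift {p : ℕ} [Fact p.Prime] (hp : 3 < p) {d : ZMod p} (hd : d ≠ 0) :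
    ∑ l : ZMod p, quadraticChar (ZMod p) (l * (l + d)) = -1 := by
  have h0 : ∑ t ∈ Finset.univ.erase (1 : ZMod p), quadraticChar (ZMod p) t = -1 := by
    have := Finset.add_sum_erase Finset.univ (quadraticChar (ZMod p)) (Finset.mem_univ (1 : ZMod p))
    rw [sum_chi_zero hp] at this
    simp only [map_one] at this
    linarith
  have h1 : ∑ l ∈ Finset.univ.erase (0 : ZMod p), quadraticChar (ZMod p) (l * (l + d))
      = ∑ t ∈ Finset.univ.erase (1 : ZMod p), quadraticChar (ZMod p) t := by
    apply Finset.sum_nbij' (i := fun l => 1 + d * l⁻¹) (j := fun t => d * (t - 1)⁻¹)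
    · intro l hl
      simp only [Finset.mem_erase, Finset.mem_univ, and_true] at hl ⊢
      intro h
      have : d * l⁻¹ = 0 := by linear_combination h
      rcases mul_eq_zero.mp this with h' | h'
      · exact hd h'
      · exact hl (inv_eq_zero.mp h')
    · intro t ht
      simp only [Finset.mem_erase, Finset.mem_univ, and_true] at ht ⊢
      intro h
      rcases mul_eq_zero.mp h with h' | h'
      · exact hd h'
      · exact ht (by
          have := inv_eq_zero.mp h'
          have : t - 1 = 0 := this
          linear_combination this)
    · intro l hl
      simp only [Finset.mem_erase, Finset.mem_univ, and_true] at hl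
      field_simp
      rw [add_sub_cancel_left, div_self hd]
    · intro t ht
      simp only [Finset.mem_erase, Finset.mem_univ, and_true] at ht
      have h1 : t - 1 ≠ 0 := sub_ne_zero.mpr ht
      field_simp
      ring
    · intro l hl
      simp only [Finset.mem_erase, Finset.mem_univ, and_true] at hl
      have : l * (l + d) = l ^ 2 * (1 + d * l⁻¹) := by field_simp
      rw [this, map_mul, quadraticChar_sq_one' hl, one_mul]
  calc ∑ l : ZMod p, quadraticChar (ZMod p) (l * (l + d))
      = ∑ l ∈ Finset.univ.erase (0 : ZMod p), quadraticChar (ZMod p) (l * (l + d)) := by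
        rw [Finset.sum_erase _ (by simp)]
    _ = -1 := by rw [h1, h0]

private lemma sum_shift_mul {p : ℕ} [Fact p.Prime] (hp : 3 < p) (a b : ZMod p) :
    ∑ l : ZMod p, quadraticChar (ZMod p) ((l + a) * (l + b)) =
      if a = b then (p : ℤ) - 1 else -1 := by
  have hre : ∑ l : ZMod p, quadraticChar (ZMod p) ((l + a) * (l + b))
      = ∑ l : ZMod p, quadraticChar (ZMod p) (l * (l + (b - a))) := by
    apply Fintype.sum_bijective (fun l : ZMod p => l + a) (Equiv.addRight a).bijective
    intro l
    ring_nf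
  rw [hre]
  split_ifs with hab
  · subst hab
    simpa using sum_sq_shift (p := p) hp
  · exact sum_mul_shift hp (sub_ne_zero.mpr (Ne.symm hab))

private lemma count_cube {p : ℕ} [Fact p.Prime] (hp : 3 < p) (hp3 : p % 3 = 2) (d : ZMod p) :
    ∑ x : ZMod p, (if x ^ 3 = d then (1 : ℤ) else 0) = 1 := by
  obtain ⟨x₀, hx₀⟩ := (cube_bij hp hp3).surjective d
  replace hx₀ : x₀ ^ 3 = d := hx₀
  have he : ∀ x : ZMod p, x ^ 3 = d ↔ x = x₀ := fun x =>
    ⟨fun h => (cube_bij hp hp3).injective (by show x ^ 3 = x₀ ^ 3; rw [h, hx₀]),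
     fun h => h ▸ hx₀⟩
  simp only [he]
  rw [Finset.sum_ite_eq' Finset.univ x₀ fun _ => (1 : ℤ)]
  simp

private lemma count_sqrt {p : ℕ} [Fact p.Prime] (hp : 3 < p) (a : ZMod p) :
    ∑ r : ZMod p, (if r ^ 2 = a then (1 : ℤ) else 0)
      = quadraticChar (ZMod p) a + 1 := by
  have h := quadraticChar_card_sqrts (rc_ne_two hp) a
  rw [← h]
  rw [Finset.sum_boole]
  norm_num

private lemma count_quad {p : ℕ} [Fact p.Prime] (hp : 3 < p) (s q : ZMod p) :
    ∑ x : ZMod p, (if x * (s - x) = q then (1 : ℤ) else 0)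
      = quadraticChar (ZMod p) (s ^ 2 - 4 * q) + 1 := by
  have h2 : (2 : ZMod p) ≠ 0 := Ring.two_ne_zero (rc_ne_two hp)
  have h4 : (4 : ZMod p) ≠ 0 := by
    have : (2 : ZMod p) * 2 = 4 := by norm_num
    rw [← this]; exact mul_ne_zero h2 h2
  have hcond : ∀ x : ZMod p, (x * (s - x) = q) ↔ ((2 * x - s) ^ 2 = s ^ 2 - 4 * q) := by
    intro x
    constructor
    · intro h; linear_combination (-4 : ZMod p) * h
    · intro h
      have h' : (4 : ZMod p) * (x * (s - x) - q) = 0 := by linear_combination -h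
      rcases mul_eq_zero.mp h' with h'' | h''
      · exact absurd h'' h4
      · exact sub_eq_zero.mp h''
  simp only [hcond]
  have hbij : Function.Bijective (fun x : ZMod p => 2 * x - s) := by
    apply Finite.injective_iff_bijective.mp
    intro a b hab
    simp only [sub_left_inj] at hab
    exact mul_left_cancel₀ h2 hab
  rw [← count_sqrt hp (s ^ 2 - 4 * q)]
  exact Fintype.sum_bijective _ hbij _ _ (fun x => rfl)

private lemma sum_cube_shift {p : ℕ} [Fact p.Prime] (hp : 3 < p) (hp3 : p % 3 = 2)
    (a : ZMod p) : ∑ s : ZMod p, quadraticChar (ZMod p) (s ^ 3 + a) = 0 := by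
  have h1 : ∑ s : ZMod p, quadraticChar (ZMod p) (s ^ 3 + a)
      = ∑ u : ZMod p, quadraticChar (ZMod p) (u + a) :=
    Fintype.sum_bijective _ (cube_bij hp hp3) _ _ (fun s => rfl)
  rw [h1, ← sum_chi_zero hp]
  exact Fintype.sum_bijective (fun u : ZMod p => u + a) (Equiv.addRight a).bijective _ _
    (fun u => rfl)

private lemma sum_S {p : ℕ} [Fact p.Prime] (hp : 3 < p) (c : ZMod p) :
    ∑ l : ZMod p, ∑ x : ZMod p, quadraticChar (ZMod p) (x ^ 3 + l * x + c)
      = (p : ℤ) * quadraticChar (ZMod p) c := by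
  rw [Finset.sum_comm, Finset.sum_eq_single (0 : ZMod p)]
  · have h0 : ∀ l : ZMod p, (0 : ZMod p) ^ 3 + l * 0 + c = c := fun l => by ring
    simp only [h0]
    rw [Finset.sum_const, Finset.card_univ, ZMod.card, nsmul_eq_mul]
  · intro x _ hx; exact sum_affine hp hx c
  · intro h; exact absurd (Finset.mem_univ 0) h

private lemma G_nonzero {p : ℕ} [Fact p.Prime] (hp : 3 < p) (c : ZMod p) {x y : ZMod p}
    (hx : x ≠ 0) (hy : y ≠ 0) :
    ∑ l : ZMod p, quadraticChar (ZMod p) ((x ^ 3 + l * x + c) * (y ^ 3 + l * y + c))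
      = quadraticChar (ZMod p) (x * y) *
        (if (x ^ 3 + c) / x = (y ^ 3 + c) / y then (p : ℤ) - 1 else -1) := by
  have hpt : ∀ l : ZMod p, (x ^ 3 + l * x + c) * (y ^ 3 + l * y + c)
      = (x * y) * ((l + (x ^ 3 + c) / x) * (l + (y ^ 3 + c) / y)) := by
    intro l; field_simp; ring
  have hpt2 : ∀ l : ZMod p, quadraticChar (ZMod p) ((x ^ 3 + l * x + c) * (y ^ 3 + l * y + c))
      = quadraticChar (ZMod p) (x * y) *
          quadraticChar (ZMod p) ((l + (x ^ 3 + c) / x) * (l + (y ^ 3 + c) / y)) := by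
    intro l; rw [hpt l, map_mul]
  simp only [hpt2]
  rw [← Finset.mul_sum, sum_shift_mul hp]

private lemma cond_iff {p : ℕ} [Fact p.Prime] (c : ZMod p) {x y : ZMod p}
    (hx : x ≠ 0) (hy : y ≠ 0) :
    (x ^ 3 + c) / x = (y ^ 3 + c) / y ↔ (x = y ∨ x * y * (x + y) = c) := by
  rw [div_eq_div_iff hx hy]
  constructor
  · intro h
    have h' : (x - y) * (x * y * (x + y) - c) = 0 := by linear_combination h
    rcases mul_eq_zero.mp h' with h'' | h''
    · exact Or.inl (sub_eq_zero.mp h'')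
    · exact Or.inr (sub_eq_zero.mp h'')
  · rintro (rfl | h)
    · ring
    · linear_combination (x - y) * h

private lemma inner_s {p : ℕ} [Fact p.Prime] (hp : 3 < p) (c : ZMod p) {s : ZMod p}
    (hs : s ≠ 0) :
    ∑ x : ZMod p, (if x * (s - x) * s = c then quadraticChar (ZMod p) (x * (s - x)) else 0)
      = quadraticChar (ZMod p) c *
          (quadraticChar (ZMod p) (s ^ 3 - 4 * c) + quadraticChar (ZMod p) s) := by
  have hterm : ∀ x : ZMod p, (if x * (s - x) * s = c
        then quadraticChar (ZMod p) (x * (s - x)) else 0)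
      = (quadraticChar (ZMod p) c * quadraticChar (ZMod p) s) *
          (if x * (s - x) = c * s⁻¹ then (1 : ℤ) else 0) := by
    intro x
    by_cases h : x * (s - x) * s = c
    · rw [if_pos h, if_pos ((eq_mul_inv_iff_mul_eq₀ hs).mpr h), mul_one]
      have h1 : c * s = x * (s - x) * s ^ 2 := by rw [← h]; ring
      have h2 : quadraticChar (ZMod p) c * quadraticChar (ZMod p) s
          = quadraticChar (ZMod p) (x * (s - x)) := by
        rw [← map_mul, h1, map_mul (quadraticChar (ZMod p)) (x * (s - x)) (s ^ 2),
          quadraticChar_sq_one' hs, mul_one]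
      exact h2.symm
    · rw [if_neg h, if_neg (fun h' => h ((eq_mul_inv_iff_mul_eq₀ hs).mp h')), mul_zero]
  simp only [hterm]
  rw [← Finset.mul_sum, count_quad hp s (c * s⁻¹)]
  have h3 : s ^ 2 - 4 * (c * s⁻¹) = (s ^ 3 - 4 * c) * s⁻¹ := by field_simp
  rw [h3]
  have h5 : quadraticChar (ZMod p) s * quadraticChar (ZMod p) ((s ^ 3 - 4 * c) * s⁻¹)
      = quadraticChar (ZMod p) (s ^ 3 - 4 * c) := by
    rw [← map_mul]
    congr 1
    field_simp
  linear_combination quadraticChar (ZMod p) c * h5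

private lemma sum_U {p : ℕ} [Fact p.Prime] (hp : 3 < p) (hp3 : p % 3 = 2)
    (c : ZMod p) (hc : c ≠ 0) :
    ∑ x ∈ Finset.univ.erase (0 : ZMod p), ∑ y ∈ Finset.univ.erase (0 : ZMod p),
        (if x * y * (x + y) = c then quadraticChar (ZMod p) (x * y) else 0)
      = -quadraticChar (ZMod p) (-1) := by
  have step1 : ∀ x : ZMod p, ∑ y ∈ Finset.univ.erase (0 : ZMod p),
        (if x * y * (x + y) = c then quadraticChar (ZMod p) (x * y) else 0)
      = ∑ y : ZMod p, (if x * y * (x + y) = c then quadraticChar (ZMod p) (x * y) else 0) := by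
    intro x
    apply Finset.sum_erase
    exact if_neg (by simpa using Ne.symm hc)
  rw [Finset.sum_congr rfl fun x _ => step1 x]
  have step1b : ∑ x ∈ Finset.univ.erase (0 : ZMod p),
        ∑ y : ZMod p, (if x * y * (x + y) = c then quadraticChar (ZMod p) (x * y) else 0)
      = ∑ x : ZMod p,
        ∑ y : ZMod p, (if x * y * (x + y) = c then quadraticChar (ZMod p) (x * y) else 0) := by
    apply Finset.sum_erase
    exact Finset.sum_eq_zero fun y _ => if_neg (by simpa using Ne.symm hc)
  rw [step1b]
  -- reindex y := s - x
  have step2 : ∀ x : ZMod p,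
      ∑ y : ZMod p, (if x * y * (x + y) = c then quadraticChar (ZMod p) (x * y) else 0)
      = ∑ s : ZMod p, (if x * (s - x) * s = c then quadraticChar (ZMod p) (x * (s - x))
          else 0) := by
    intro x
    refine (Fintype.sum_bijective (fun s : ZMod p => s - x) (Equiv.subRight x).bijective _ _
      (fun s => ?_)).symm
    have h1 : x * (s - x) * (x + (s - x)) = x * (s - x) * s := by ring
    rw [h1]
  rw [Finset.sum_congr rfl fun x _ => step2 x, Finset.sum_comm]
  -- now sum over s; the s = 0 term vanishes
  have step3 : ∑ s ∈ Finset.univ.erase (0 : ZMod p),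
        ∑ x : ZMod p, (if x * (s - x) * s = c then quadraticChar (ZMod p) (x * (s - x)) else 0)
      = ∑ s : ZMod p,
        ∑ x : ZMod p, (if x * (s - x) * s = c then quadraticChar (ZMod p) (x * (s - x)) else 0) := by
    apply Finset.sum_erase
    exact Finset.sum_eq_zero fun x _ => if_neg (by simpa using Ne.symm hc)
  rw [← step3]
  rw [Finset.sum_congr rfl fun s hs => inner_s hp c (Finset.ne_of_mem_erase hs)]
  rw [← Finset.mul_sum, Finset.sum_add_distrib]
  have hA : ∑ s ∈ Finset.univ.erase (0 : ZMod p), quadraticChar (ZMod p) (s ^ 3 - 4 * c)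
      = -quadraticChar (ZMod p) (-(4 * c)) := by
    rw [Finset.sum_erase_eq_sub (Finset.mem_univ 0)]
    have h0 : ∀ s : ZMod p, s ^ 3 - 4 * c = s ^ 3 + (-(4 * c)) := fun s => by ring
    simp only [h0]
    rw [sum_cube_shift hp hp3]
    norm_num
  have hB : ∑ s ∈ Finset.univ.erase (0 : ZMod p), quadraticChar (ZMod p) s = 0 := by
    rw [Finset.sum_erase _ (by simp), sum_chi_zero hp]
  rw [hA, hB, add_zero]
  have h4 : quadraticChar (ZMod p) (-(4 * c))
      = quadraticChar (ZMod p) (-1) * quadraticChar (ZMod p) c := by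
    have he : (-(4 * c) : ZMod p) = (-1) * c * 2 ^ 2 := by ring
    rw [he, map_mul, map_mul, quadraticChar_sq_one' (Ring.two_ne_zero (rc_ne_two hp)), mul_one]
  rw [h4]
  have hcsq : quadraticChar (ZMod p) c * quadraticChar (ZMod p) c = 1 := by
    rw [← pow_two]; exact quadraticChar_sq_one hc
  linear_combination (- quadraticChar (ZMod p) (-1)) * hcsq

private lemma count_bij {p : ℕ} [Fact p.Prime] {f : ZMod p → ZMod p}
    (hf : Function.Bijective f) (d : ZMod p) :
    ∑ x : ZMod p, (if f x = d then (1 : ℤ) else 0) = 1 := by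
  obtain ⟨x₀, hx₀⟩ := hf.surjective d
  have he : ∀ x, f x = d ↔ x = x₀ := fun x =>
    ⟨fun h => hf.injective (by rw [h, hx₀]), fun h => h ▸ hx₀⟩
  simp only [he]
  rw [Finset.sum_ite_eq' Finset.univ x₀ fun _ => (1 : ℤ)]
  simp

private lemma sum_S2 {p : ℕ} [Fact p.Prime] (hp : 3 < p) (hp3 : p % 3 = 2)
    (c : ZMod p) (hc : c ≠ 0) :
    ∑ l : ZMod p, (∑ x : ZMod p, quadraticChar (ZMod p) (x ^ 3 + l * x + c)) ^ 2
      = (p : ℤ) * ((p : ℤ) - 1 - quadraticChar (ZMod p) (-1)) := by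
  have h2 : (2 : ZMod p) ≠ 0 := Ring.two_ne_zero (rc_ne_two hp)
  have e1 : ∀ l : ZMod p, (∑ x : ZMod p, quadraticChar (ZMod p) (x ^ 3 + l * x + c)) ^ 2
      = ∑ x : ZMod p, ∑ y : ZMod p,
          quadraticChar (ZMod p) ((x ^ 3 + l * x + c) * (y ^ 3 + l * y + c)) := by
    intro l
    rw [pow_two, Finset.sum_mul_sum]
    exact Finset.sum_congr rfl fun x _ => Finset.sum_congr rfl fun y _ => (map_mul _ _ _).symm
  simp only [e1]
  rw [Finset.sum_comm]
  rw [Finset.sum_congr rfl fun x (_ : x ∈ Finset.univ) => Finset.sum_comm]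
  -- now goal : ∑ x, ∑ y, ∑ l, χ (Px l * Py l) = RHS
  have hG00 : (∑ l : ZMod p, quadraticChar (ZMod p)
        (((0 : ZMod p) ^ 3 + l * 0 + c) * ((0 : ZMod p) ^ 3 + l * 0 + c))) = (p : ℤ) := by
    have h0 : ∀ l : ZMod p,
        ((0 : ZMod p) ^ 3 + l * 0 + c) * ((0 : ZMod p) ^ 3 + l * 0 + c) = c ^ 2 :=
      fun l => by ring
    simp only [h0, quadraticChar_sq_one' hc]
    rw [Finset.sum_const, Finset.card_univ, ZMod.card, nsmul_eq_mul, mul_one]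
  have hG0y : ∀ y : ZMod p, y ≠ 0 → (∑ l : ZMod p, quadraticChar (ZMod p)
        (((0 : ZMod p) ^ 3 + l * 0 + c) * (y ^ 3 + l * y + c))) = 0 := by
    intro y hy
    have h0 : ∀ l : ZMod p, ((0 : ZMod p) ^ 3 + l * 0 + c) * (y ^ 3 + l * y + c)
        = c * (y ^ 3 + l * y + c) := fun l => by ring
    simp only [h0, map_mul]
    rw [← Finset.mul_sum, sum_affine hp hy c, mul_zero]
  have hGx0 : ∀ x : ZMod p, x ≠ 0 → (∑ l : ZMod p, quadraticChar (ZMod p)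
        ((x ^ 3 + l * x + c) * ((0 : ZMod p) ^ 3 + l * 0 + c))) = 0 := by
    intro x hx
    have h0 : ∀ l : ZMod p, (x ^ 3 + l * x + c) * ((0 : ZMod p) ^ 3 + l * 0 + c)
        = c * (x ^ 3 + l * x + c) := fun l => by ring
    simp only [h0, map_mul]
    rw [← Finset.mul_sum, sum_affine hp hx c, mul_zero]
  rw [← Finset.add_sum_erase Finset.univ _ (Finset.mem_univ (0 : ZMod p))]
  rw [← Finset.add_sum_erase Finset.univ _ (Finset.mem_univ (0 : ZMod p))]
  rw [hG00, Finset.sum_congr rfl (fun y hy => hG0y y (Finset.ne_of_mem_erase hy)),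
    Finset.sum_const_zero, add_zero]
  have hsplit : ∀ x ∈ Finset.univ.erase (0 : ZMod p),
      (∑ y : ZMod p, ∑ l : ZMod p, quadraticChar (ZMod p)
        ((x ^ 3 + l * x + c) * (y ^ 3 + l * y + c)))
      = ∑ y ∈ Finset.univ.erase (0 : ZMod p), ∑ l : ZMod p, quadraticChar (ZMod p)
        ((x ^ 3 + l * x + c) * (y ^ 3 + l * y + c)) := by
    intro x hx
    rw [← Finset.add_sum_erase Finset.univ _ (Finset.mem_univ (0 : ZMod p)),
      hGx0 x (Finset.ne_of_mem_erase hx), zero_add]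
  rw [Finset.sum_congr rfl hsplit]
  have key : ∀ x ∈ Finset.univ.erase (0 : ZMod p), ∀ y ∈ Finset.univ.erase (0 : ZMod p),
      (∑ l : ZMod p, quadraticChar (ZMod p) ((x ^ 3 + l * x + c) * (y ^ 3 + l * y + c)))
      = -quadraticChar (ZMod p) (x * y)
        + (p : ℤ) * (if x = y then (1 : ℤ) else 0)
        + (p : ℤ) * (if x * y * (x + y) = c then quadraticChar (ZMod p) (x * y) else 0)
        - (p : ℤ) * (if (x = y ∧ x * y * (x + y) = c) then (1 : ℤ) else 0) := by
    intro x hx y hy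
    rw [Finset.mem_erase] at hx hy
    rw [G_nonzero hp c hx.1 hy.1]
    rw [if_congr (cond_iff c hx.1 hy.1) rfl rfl]
    by_cases h1 : x = y
    · have hsq : quadraticChar (ZMod p) (x * y) = 1 := by
        rw [← h1, ← pow_two]
        exact quadraticChar_sq_one' hx.1
      by_cases hq : x * y * (x + y) = c
      · rw [if_pos (Or.inl h1), if_pos h1, if_pos hq, if_pos ⟨h1, hq⟩, hsq]; ring
      · rw [if_pos (Or.inl h1), if_pos h1, if_neg hq, if_neg (fun h : x = y ∧ x * y * (x + y) = c => hq h.2), hsq]; ring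
    · by_cases hq : x * y * (x + y) = c
      · rw [if_pos (Or.inr hq), if_neg h1, if_pos hq, if_neg (fun h : x = y ∧ x * y * (x + y) = c => h1 h.1)]; ring
      · rw [if_neg (by tauto), if_neg h1, if_neg hq, if_neg (fun h : x = y ∧ x * y * (x + y) = c => h1 h.1)]; ring
  rw [Finset.sum_congr rfl fun x hx => Finset.sum_congr rfl fun y hy => key x hx y hy]
  simp only [Finset.sum_add_distrib, Finset.sum_sub_distrib]
  have hchiE : ∑ y ∈ Finset.univ.erase (0 : ZMod p), quadraticChar (ZMod p) y = 0 := by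
    rw [Finset.sum_erase _ (by simp), sum_chi_zero hp]
  have hT1 : ∑ x ∈ Finset.univ.erase (0 : ZMod p), ∑ y ∈ Finset.univ.erase (0 : ZMod p),
      -quadraticChar (ZMod p) (x * y) = 0 := by
    apply Finset.sum_eq_zero
    intro x hx
    simp only [map_mul]
    rw [Finset.sum_neg_distrib, ← Finset.mul_sum, hchiE, mul_zero, neg_zero]
  have hT2 : ∑ x ∈ Finset.univ.erase (0 : ZMod p), ∑ y ∈ Finset.univ.erase (0 : ZMod p),
      (p : ℤ) * (if x = y then (1 : ℤ) else 0) = (p : ℤ) * ((p : ℤ) - 1) := by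
    have hinner : ∀ x ∈ Finset.univ.erase (0 : ZMod p),
        ∑ y ∈ Finset.univ.erase (0 : ZMod p), (p : ℤ) * (if x = y then (1 : ℤ) else 0)
          = (p : ℤ) := by
      intro x hx
      rw [← Finset.mul_sum,
        Finset.sum_ite_eq (Finset.univ.erase (0 : ZMod p)) x fun _ => (1 : ℤ),
        if_pos hx, mul_one]
    rw [Finset.sum_congr rfl hinner, Finset.sum_const,
      Finset.card_erase_of_mem (Finset.mem_univ 0), Finset.card_univ, ZMod.card,
      nsmul_eq_mul]
    push_cast [Nat.cast_sub (by omega : 1 ≤ p)]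
    ring
  have hTU : ∑ x ∈ Finset.univ.erase (0 : ZMod p), ∑ y ∈ Finset.univ.erase (0 : ZMod p),
      (p : ℤ) * (if x * y * (x + y) = c then quadraticChar (ZMod p) (x * y) else 0)
      = (p : ℤ) * (-quadraticChar (ZMod p) (-1)) := by
    simp only [← Finset.mul_sum]
    rw [sum_U hp hp3 c hc]
  have hT3 : ∑ x ∈ Finset.univ.erase (0 : ZMod p), ∑ y ∈ Finset.univ.erase (0 : ZMod p),
      (p : ℤ) * (if (x = y ∧ x * y * (x + y) = c) then (1 : ℤ) else 0) = (p : ℤ) := by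
    simp only [← Finset.mul_sum]
    have hinner : ∀ x ∈ Finset.univ.erase (0 : ZMod p),
        ∑ y ∈ Finset.univ.erase (0 : ZMod p),
          (if (x = y ∧ x * y * (x + y) = c) then (1 : ℤ) else 0)
        = (if x * x * (x + x) = c then (1 : ℤ) else 0) := by
      intro x hx
      simp only [ite_and]
      rw [Finset.sum_ite_eq (Finset.univ.erase (0 : ZMod p)) x
        fun y => (if x * y * (x + y) = c then (1 : ℤ) else 0), if_pos hx]
    rw [Finset.sum_congr rfl hinner]
    have hbij : Function.Bijective (fun x : ZMod p => x * x * (x + x)) := by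
      have hfe : (fun x : ZMod p => x * x * (x + x))
          = (fun t : ZMod p => 2 * t) ∘ (fun x : ZMod p => x ^ 3) := by
        funext x; simp only [Function.comp]; ring
      rw [hfe]
      exact Function.Bijective.comp (Equiv.mulLeft₀ (2 : ZMod p) h2).bijective
        (cube_bij hp hp3)
    have hext : ∑ x ∈ Finset.univ.erase (0 : ZMod p),
        (if x * x * (x + x) = c then (1 : ℤ) else 0)
        = ∑ x : ZMod p, (if x * x * (x + x) = c then (1 : ℤ) else 0) := by
      apply Finset.sum_erase
      exact if_neg (by simpa using Ne.symm hc)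
    rw [hext, count_bij hbij c, mul_one]
  rw [hT1, hT2, hTU, hT3]
  ring

theorem stmt16 (p : ℕ) [Fact p.Prime] (hp : 3 < p) (hp3 : p % 3 = 2)
    (c : ZMod p) (hc : c ≠ 0) :
    ((((∑ l : ZMod p, (∑ x : ZMod p, quadraticChar (ZMod p) (x ^ 3 + l * x + c)) ^ 2) : ℤ) : ℚ) / p) -
      ((((∑ l : ZMod p, ∑ x : ZMod p, quadraticChar (ZMod p) (x ^ 3 + l * x + c)) : ℤ) : ℚ) / p) ^ 2
      = p - 2 - quadraticChar (ZMod p) (-1) := by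
  have hp0 : (p : ℚ) ≠ 0 := Nat.cast_ne_zero.mpr (by omega)
  rw [sum_S hp c, sum_S2 hp hp3 c hc]
  have h1 : ((quadraticChar (ZMod p) c : ℤ) : ℚ) ^ 2 = 1 := by
    have := quadraticChar_sq_one hc
    exact_mod_cast congrArg (Int.cast : ℤ → ℚ) this
  have h1' : ((quadraticCharFun (ZMod p) c : ℤ) : ℚ) ^ 2 = 1 := h1
  push_cast
  field_simp
  linear_combination -h1
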